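/- (Classification of vectors of type (b) in L₄) Let c ∈ ℤ⁴ be nonzero. Then cᵀG₄⁻¹c = 2/5 and the least positive integer k with k·G₄⁻¹c ∈ ℤ⁴ equals 5 if and only if c or −c belongs to the set {(0,1,1,0), (0,1,−1,0), (0,1,0,1), (0,1,0,−1), (0,0,1,1), (0,0,1,−1)}. -/

import Mathlib

open Matrix

/-- The Gram matrix of the even positive definite lattice `L₄` (determinant 500). -/
def G4 : Matrix (Fin 4) (Fin 4) ℚ :=
  !![4, 2, 2, 2; 2, 6, 1, 1; 2, 1, 6, 1; 2, 1, 1, 6]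

/-- The inverse of `G4`. -/
def Ginv : Matrix (Fin 4) (Fin 4) ℚ :=
  !![4/10, -1/10, -1/10, -1/10; -1/10, 2/10, 0, 0; -1/10, 0, 2/10, 0; -1/10, 0, 0, 2/10]

lemma hG4inv : G4⁻¹ = Ginv := by
  have h : G4 * Ginv = 1 := by
    ext i j
    fin_cases i <;> fin_cases j <;>
      simp only [G4, Ginv, Matrix.mul_apply, Fin.sum_univ_four, Matrix.of_apply,
        Matrix.cons_val_zero, Matrix.cons_val_one, Matrix.cons_val_two, Matrix.cons_val_three,
        Matrix.head_cons, Matrix.tail_cons, Matrix.one_apply, Fin.mk_zero, Fin.mk_one] <;>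
      norm_num [Fin.ext_iff] <;> simp <;> norm_num
  rw [inv_eq_right_inv h]

lemma mv (a b d e : ℤ) :
    Ginv.mulVec (fun i => ((![a,b,d,e] : Fin 4 → ℤ) i : ℚ)) =
      ![((4*a - b - d - e : ℤ) : ℚ)/10, ((2*b - a : ℤ) : ℚ)/10,
        ((2*d - a : ℤ) : ℚ)/10, ((2*e - a : ℤ) : ℚ)/10] := by
  funext i
  have h : ∀ j : Fin 4, Ginv.mulVec (fun i => ((![a,b,d,e] : Fin 4 → ℤ) i : ℚ)) j
      = Ginv j 0 * a + Ginv j 1 * b + Ginv j 2 * d + Ginv j 3 * e := by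
    intro j
    simp only [Matrix.mulVec, dotProduct, Fin.sum_univ_four,
      Matrix.cons_val_zero, Matrix.cons_val_one, Matrix.cons_val_two, Matrix.cons_val_three,
      Matrix.head_cons, Matrix.tail_cons]
  fin_cases i <;> rw [h] <;> norm_num [Ginv] <;> push_cast <;> try ring

lemma div10 (k : ℕ) (n : ℤ) :
    (∃ m : ℤ, (k : ℚ) * ((n : ℚ)/10) = m) ↔ (10 : ℤ) ∣ (k : ℤ) * n := by
  constructor
  · rintro ⟨m, hm⟩
    refine ⟨m, ?_⟩
    have h : ((k : ℤ) * n : ℚ) = ((10 * m : ℤ) : ℚ) := by push_cast; push_cast at hm; linarith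
    exact_mod_cast h
  · rintro ⟨m, hm⟩
    refine ⟨m, ?_⟩
    have h : ((k : ℤ) * n : ℚ) = ((10 * m : ℤ) : ℚ) := by exact_mod_cast congrArg (fun z : ℤ => (z : ℚ)) hm
    push_cast at h ⊢
    linarith

set_option maxHeartbeats 1000000 in
theorem L4_type_b_classification (c : Fin 4 → ℤ) (hc : c ≠ 0) :
    ((fun i => (c i : ℚ)) ⬝ᵥ G4⁻¹.mulVec (fun i => (c i : ℚ)) = 2 / 5 ∧
      IsLeast {k : ℕ | 0 < k ∧
        ∀ i, ∃ m : ℤ, (k : ℚ) * G4⁻¹.mulVec (fun i => (c i : ℚ)) i = (m : ℚ)} 5) ↔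
    (c = ![0, 1, 1, 0] ∨ c = ![0, 1, -1, 0] ∨ c = ![0, 1, 0, 1] ∨ c = ![0, 1, 0, -1] ∨
      c = ![0, 0, 1, 1] ∨ c = ![0, 0, 1, -1] ∨
      -c = ![0, 1, 1, 0] ∨ -c = ![0, 1, -1, 0] ∨ -c = ![0, 1, 0, 1] ∨ -c = ![0, 1, 0, -1] ∨
      -c = ![0, 0, 1, 1] ∨ -c = ![0, 0, 1, -1]) := by
  obtain ⟨a, b, d, e, rfl⟩ : ∃ a b d e, c = ![a, b, d, e] :=
    ⟨c 0, c 1, c 2, c 3, by funext i; fin_cases i <;> rfl⟩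
  rw [hG4inv, mv]
  -- rewrite the norm condition
  have hdot : (fun i => ((![a,b,d,e] : Fin 4 → ℤ) i : ℚ)) ⬝ᵥ
      ![((4*a - b - d - e : ℤ) : ℚ)/10, ((2*b - a : ℤ) : ℚ)/10,
        ((2*d - a : ℤ) : ℚ)/10, ((2*e - a : ℤ) : ℚ)/10]
      = ((4*a^2 - 2*a*(b+d+e) + 2*(b^2+d^2+e^2) : ℤ) : ℚ)/10 := by
    simp only [dotProduct, Fin.sum_univ_four,
      Matrix.cons_val_zero, Matrix.cons_val_one, Matrix.cons_val_two, Matrix.cons_val_three,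
      Matrix.head_cons, Matrix.tail_cons]
    push_cast; ring
  have hnorm : ((fun i => ((![a,b,d,e] : Fin 4 → ℤ) i : ℚ)) ⬝ᵥ
      ![((4*a - b - d - e : ℤ) : ℚ)/10, ((2*b - a : ℤ) : ℚ)/10,
        ((2*d - a : ℤ) : ℚ)/10, ((2*e - a : ℤ) : ℚ)/10] = 2/5) ↔
      (2*a^2 + b^2 + d^2 + e^2 - a*(b+d+e) = 2) := by
    rw [hdot, div_eq_iff (by norm_num : (10:ℚ) ≠ 0),
      show (2/5 * 10 : ℚ) = ((4:ℤ) : ℚ) by norm_num, Int.cast_inj]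
    constructor <;> intro h <;> nlinarith [h]
  rw [hnorm]
  -- rewrite the order condition
  have hmem : ∀ k : ℕ, (∀ i, ∃ m : ℤ, (k : ℚ) *
      ![((4*a - b - d - e : ℤ) : ℚ)/10, ((2*b - a : ℤ) : ℚ)/10,
        ((2*d - a : ℤ) : ℚ)/10, ((2*e - a : ℤ) : ℚ)/10] i = (m : ℚ)) ↔
      ((10:ℤ) ∣ (k:ℤ)*(4*a - b - d - e) ∧ (10:ℤ) ∣ (k:ℤ)*(2*b - a) ∧
        (10:ℤ) ∣ (k:ℤ)*(2*d - a) ∧ (10:ℤ) ∣ (k:ℤ)*(2*e - a)) := by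
    intro k
    constructor
    · intro h
      exact ⟨(div10 k _).1 (h 0), (div10 k _).1 (h 1), (div10 k _).1 (h 2), (div10 k _).1 (h 3)⟩
    · rintro ⟨h0, h1, h2, h3⟩ i
      fin_cases i
      · exact (div10 k _).2 h0
      · exact (div10 k _).2 h1
      · exact (div10 k _).2 h2
      · exact (div10 k _).2 h3
  simp only [hmem]
  -- rewrite the right-hand side into component equations
  have hveq : ∀ p q r s x y z w : ℤ, ((![p,q,r,s] : Fin 4 → ℤ) = ![x,y,z,w]) ↔
      (p = x ∧ q = y ∧ r = z ∧ s = w) := by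
    intro p q r s x y z w
    constructor
    · intro h
      exact ⟨congrFun h 0, congrFun h 1, congrFun h 2, congrFun h 3⟩
    · rintro ⟨rfl, rfl, rfl, rfl⟩; rfl
  have hneg : -(![a,b,d,e] : Fin 4 → ℤ) = ![-a,-b,-d,-e] := by
    funext i; fin_cases i <;> rfl
  rw [hneg]
  simp only [hveq, neg_eq_iff_eq_neg, neg_zero, neg_neg]
  constructor
  · rintro ⟨h1, ⟨-, hd0, hd1, hd2, hd3⟩, -⟩
    have h5 : ((5:ℕ):ℤ) = 5 := by norm_num
    rw [h5] at hd1
    have haeven : 2 ∣ a := by omega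
    have ha2 : a^2 ≤ 1 := by nlinarith [sq_nonneg (2*b-a), sq_nonneg (2*d-a), sq_nonneg (2*e-a)]
    have ha : a = 0 := by
      have h1a : -1 ≤ a ∧ a ≤ 1 := ⟨by nlinarith, by nlinarith⟩
      omega
    subst ha
    have hb : -1 ≤ b ∧ b ≤ 1 := ⟨by nlinarith, by nlinarith⟩
    have hd : -1 ≤ d ∧ d ≤ 1 := ⟨by nlinarith, by nlinarith⟩
    have he : -1 ≤ e ∧ e ≤ 1 := ⟨by nlinarith, by nlinarith⟩
    obtain ⟨hb1, hb2⟩ := hb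
    obtain ⟨hd1', hd2'⟩ := hd
    obtain ⟨he1, he2⟩ := he
    interval_cases b <;> interval_cases d <;> interval_cases e <;> revert h1 <;> norm_num
  · intro h
    clear hdot hnorm hmem hveq hneg hc
    rcases h with ⟨rfl,rfl,rfl,rfl⟩|⟨rfl,rfl,rfl,rfl⟩|⟨rfl,rfl,rfl,rfl⟩|⟨rfl,rfl,rfl,rfl⟩|
      ⟨rfl,rfl,rfl,rfl⟩|⟨rfl,rfl,rfl,rfl⟩|⟨rfl,rfl,rfl,rfl⟩|⟨rfl,rfl,rfl,rfl⟩|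
      ⟨rfl,rfl,rfl,rfl⟩|⟨rfl,rfl,rfl,rfl⟩|⟨rfl,rfl,rfl,rfl⟩|⟨rfl,rfl,rfl,rfl⟩ <;>
      refine ⟨by norm_num, ⟨by norm_num, by norm_num, by norm_num, by norm_num, by norm_num⟩,
        fun k hk => ?_⟩ <;>
      · obtain ⟨hk0, h1, h2, h3, h4⟩ := hk
        omega
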